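/- In any optimal biclustering 𝓑 of a bipartite graph G, every vertex v is incident to at most deg_G(v) modified edges. -/

import Mathlib

def BipartiteWith {V : Type*} (G : SimpleGraph V) (side : V → Bool) : Prop :=
  ∀ u v, G.Adj u v → side u ≠ side v

def BiclusterGraph {V : Type*} (G : SimpleGraph V) (side : V → Bool) : Prop :=
  ∀ u v, G.Reachable u v → side u ≠ side v → G.Adj u v

def Biclustering {V : Type*} (B : SimpleGraph V) (side : V → Bool) : Prop :=
  BipartiteWith B side ∧ BiclusterGraph B side

theorem stmt_13 {V : Type*} [Fintype V] (G B : SimpleGraph V) (side : V → Bool)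
    (hG : BipartiteWith G side) (hB : Biclustering B side)
    (hopt : ∀ B' : SimpleGraph V, Biclustering B' side →
      (symmDiff G.edgeSet B.edgeSet).ncard ≤ (symmDiff G.edgeSet B'.edgeSet).ncard) :
    ∀ v : V, {e ∈ symmDiff G.edgeSet B.edgeSet | v ∈ e}.ncard ≤ (G.neighborSet v).ncard := by
  classical
  intro v
  set D := symmDiff G.edgeSet B.edgeSet with hDdef
  -- B' : B with v isolated
  let B' : SimpleGraph V :=
    { Adj := fun a b => B.Adj a b ∧ a ≠ v ∧ b ≠ v
      symm := ⟨fun a b h => ⟨h.1.symm, h.2.2, h.2.1⟩⟩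
      loopless := ⟨fun a h => B.loopless.irrefl a h.1⟩ }
  have hle : B' ≤ B := fun a b h => h.1
  have hiso : ∀ w, ¬ B'.Adj v w := fun w h => h.2.1 rfl
  have hreach : ∀ u w, B'.Reachable u w → u = v → w = v := by
    intro u w h hu
    subst hu
    obtain ⟨p⟩ := h
    cases p with
    | nil => rfl
    | cons h _ => exact absurd h (hiso _)
  have hB' : Biclustering B' side := by
    constructor
    · intro a b hab; exact hB.1 a b hab.1
    · intro a b hr hs
      rcases eq_or_ne a v with rfl | ha
      · have : b = a := hreach _ _ hr rfl
        subst this; exact absurd rfl hs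
      rcases eq_or_ne b v with rfl | hb
      · have : a = b := hreach _ _ hr.symm rfl
        subst this; exact absurd rfl hs
      exact ⟨hB.2 a b (hr.mono hle) hs, ha, hb⟩
  -- edge facts about B'
  have F1 : ∀ e : Sym2 V, v ∈ e → e ∉ B'.edgeSet := by
    intro e
    induction e using Sym2.ind with
    | _ a b =>
      intro hv hadj
      rw [SimpleGraph.mem_edgeSet] at hadj
      rcases Sym2.mem_iff.mp hv with h | h
      · exact hadj.2.1 h.symm
      · exact hadj.2.2 h.symm
  have F2 : ∀ e : Sym2 V, v ∉ e → (e ∈ B'.edgeSet ↔ e ∈ B.edgeSet) := by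
    intro e
    induction e using Sym2.ind with
    | _ a b =>
      intro hv
      rw [Sym2.mem_iff] at hv
      push_neg at hv
      simp only [SimpleGraph.mem_edgeSet]
      exact ⟨fun h => h.1, fun h => ⟨h, fun h' => hv.1 h'.symm, fun h' => hv.2 h'.symm⟩⟩
  have h1 : symmDiff G.edgeSet B'.edgeSet =
      {e ∈ D | v ∉ e} ∪ {e ∈ G.edgeSet | v ∈ e} := by
    ext e
    by_cases hv : v ∈ e
    · simp only [Set.mem_symmDiff, Set.mem_union, Set.mem_setOf_eq, hDdef]
      have := F1 e hv
      tauto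
    · simp only [Set.mem_symmDiff, Set.mem_union, Set.mem_setOf_eq, hDdef]
      have := F2 e hv
      tauto
  have h2 : D = {e ∈ D | v ∉ e} ∪ {e ∈ D | v ∈ e} := by
    ext e; by_cases hv : v ∈ e <;> simp [hv]
  have hfin : ∀ s : Set (Sym2 V), s.Finite := fun s => s.toFinite
  have hd1 : Disjoint {e ∈ D | v ∉ e} {e ∈ G.edgeSet | v ∈ e} := by
    rw [Set.disjoint_left]; rintro e ⟨_, h⟩ ⟨_, h'⟩; exact h h'
  have hd2 : Disjoint {e ∈ D | v ∉ e} {e ∈ D | v ∈ e} := by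
    rw [Set.disjoint_left]; rintro e ⟨_, h⟩ ⟨_, h'⟩; exact h h'
  have key := hopt B' hB'
  rw [h1, Set.ncard_union_eq hd1 (hfin _) (hfin _)] at key
  conv_lhs at key => rw [h2, Set.ncard_union_eq hd2 (hfin _) (hfin _)]
  have hle' : {e ∈ D | v ∈ e}.ncard ≤ {e ∈ G.edgeSet | v ∈ e}.ncard := by omega
  have hcard : {e ∈ G.edgeSet | v ∈ e}.ncard = (G.neighborSet v).ncard := by
    rw [← Nat.card_coe_set_eq, ← Nat.card_coe_set_eq]
    exact Nat.card_congr (G.incidenceSetEquivNeighborSet v)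
  rw [← hcard]
  exact hle'
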